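/- Let m ∈ ℕ. Then: (i) for every f(z) = ∑_{n≥m} a_n zⁿ analytic on 𝔻 with ‖f‖_∞ ≤ 1 and every 0 ≤ r ≤ 1 − (2/3)^{1/(m+1)}, one has (1/m!) ∑_{n≥m} n(n−1)⋯(n−m+1) |a_n| r^{n−m} ≤ 1 (i.e. ∑_{n≥m} C(n,m) |a_n| r^{n−m} ≤ 1); (ii) for every r with 1 − (2/3)^{1/(m+1)} < r < 1 there exists f(z) = ∑_{n≥m} a_n zⁿ analytic on 𝔻 with ‖f‖_∞ ≤ 1 and ∑_{n≥m} C(n,m) |a_n| r^{n−m} > 1. Thus the Bohr radius of the pair (identity on functions vanishing to order m, the normalized m-th derivative ∂^m/m!) equals 1 − (2/3)^{1/(m+1)}. -/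

import Mathlib

open Metric Filter FormalMultilinearSeries Topology

private lemma mem_eball_iff {z : ℂ} : z ∈ Metric.eball (0:ℂ) 1 ↔ z ∈ Metric.ball (0:ℂ) 1 := by
  rw [show (1 : ENNReal) = ((1:NNReal) : ENNReal) by simp, Metric.emetric_ball_nnreal]
  simp

private lemma framework_coeff {B : ℕ → ℂ} (n : ℕ) : (ofScalars ℂ B).coeff n = B n := by
  have h : (ofScalars ℂ B).coeff n = (ofScalars ℂ B n) fun _ => (1:ℂ) := rfl
  rw [h, ofScalars_apply_eq]
  simp

private lemma framework {B : ℕ → ℂ}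
    (h : ∀ x : ℝ, 0 < x → x < 1 → ∃ C, ∀ n, ‖B n‖ * x ^ n ≤ C) :
    HasFPowerSeriesOnBall (ofScalars ℂ B).sum (ofScalars ℂ B) 0 1 := by
  have hrad : 1 ≤ (ofScalars ℂ B).radius := by
    apply ENNReal.le_of_forall_nnreal_lt
    intro r hr
    rcases eq_or_lt_of_le (show 0 ≤ r from zero_le) with hr0 | hr0
    · rw [← hr0]; simp
    · have hx1 : (r : ℝ) < 1 := by exact_mod_cast hr
      obtain ⟨C, hC⟩ := h r hr0 hx1
      refine le_radius_of_bound _ C (fun n => ?_)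
      rw [ofScalars_norm]
      exact hC n
  exact ((ofScalars ℂ B).hasFPowerSeriesOnBall (lt_of_lt_of_le one_pos hrad)).mono one_pos hrad

private lemma framework_hasSum {B : ℕ → ℂ}
    (h : HasFPowerSeriesOnBall (ofScalars ℂ B).sum (ofScalars ℂ B) 0 1)
    {z : ℂ} (hz : z ∈ Metric.ball (0:ℂ) 1) :
    HasSum (fun n => B n * z ^ n) ((ofScalars ℂ B).sum z) := by
  have := h.hasSum (y := z) (mem_eball_iff.2 hz)
  simp only [zero_add, ofScalars_apply_eq, smul_eq_mul] at this
  exact this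

private lemma framework_diff {B : ℕ → ℂ}
    (h : HasFPowerSeriesOnBall (ofScalars ℂ B).sum (ofScalars ℂ B) 0 1) :
    DifferentiableOn ℂ (ofScalars ℂ B).sum (Metric.ball (0:ℂ) 1) := by
  have := h.differentiableOn
  exact fun z hz => (this z (mem_eball_iff.2 hz)).mono (fun w hw => mem_eball_iff.2 hw)

/-- Cauchy estimates -/
private lemma cauchy_bound {f : ℂ → ℂ} (hd : DifferentiableOn ℂ f (Metric.ball (0:ℂ) 1))
    (hb : ∀ z ∈ Metric.ball (0:ℂ) 1, ‖f z‖ ≤ 1)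
    {p : FormalMultilinearSeries ℂ ℂ ℂ} (hp : HasFPowerSeriesAt f p 0) (n : ℕ) :
    ‖p.coeff n‖ ≤ 1 := by
  have key : ∀ ρ : ℝ, 0 < ρ → ρ < 1 → ‖p.coeff n‖ ≤ ρ⁻¹ ^ n := by
    intro ρ h0 h1
    set ρ' : NNReal := ⟨ρ, h0.le⟩ with hρ'
    have hcoe : (ρ' : ℝ) = ρ := rfl
    have hsub : Metric.closedBall (0:ℂ) ρ' ⊆ Metric.ball (0:ℂ) 1 := by
      intro z hz
      simp only [Metric.mem_closedBall, Metric.mem_ball] at *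
      rw [hcoe] at hz
      exact lt_of_le_of_lt hz h1
    have hρball : HasFPowerSeriesOnBall f (cauchyPowerSeries f 0 ρ') 0 ρ' :=
      (hd.mono hsub).hasFPowerSeriesOnBall (by rw [← NNReal.coe_pos, hcoe]; exact h0)
    have hpq : p = cauchyPowerSeries f 0 ρ' :=
      hp.eq_formalMultilinearSeries hρball.hasFPowerSeriesAt
    have hmem : ∀ θ : ℝ, circleMap 0 ρ' θ ∈ Metric.ball (0:ℂ) 1 := by
      intro θ
      simp only [Metric.mem_ball, dist_zero_right]
      rw [norm_circleMap_zero, hcoe, abs_of_pos h0]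
      exact h1
    have hcont : Continuous fun θ : ℝ => f (circleMap 0 ρ' θ) :=
      (hd.continuousOn).comp_continuous (continuous_circleMap 0 ρ') hmem
    have hint : (∫ θ : ℝ in (0)..2 * Real.pi, ‖f (circleMap 0 ρ' θ)‖) ≤ 2 * Real.pi := by
      have h2 : (∫ θ : ℝ in (0)..2 * Real.pi, ‖f (circleMap 0 ρ' θ)‖) ≤
          ∫ _ : ℝ in (0)..2 * Real.pi, (1:ℝ) :=
        intervalIntegral.integral_mono_on Real.two_pi_pos.le
          (hcont.norm.intervalIntegrable _ _) (intervalIntegrable_const)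
          (fun θ _ => hb _ (hmem θ))
      simpa using h2
    have hnorm := norm_cauchyPowerSeries_le f 0 ρ' n
    have h1n : ‖p.coeff n‖ ≤ ‖p n‖ := by
      have h := (p n).le_opNorm (fun _ => (1:ℂ))
      simp only [norm_one, Finset.prod_const, one_pow, mul_one] at h
      exact h
    rw [hpq] at h1n ⊢
    refine h1n.trans (hnorm.trans ?_)
    have habs : |(ρ' : ℝ)| = ρ := by rw [hcoe, abs_of_pos h0]
    rw [habs]
    have hfrac : (2 * Real.pi)⁻¹ * (∫ θ : ℝ in (0)..2 * Real.pi, ‖f (circleMap 0 ρ' θ)‖) ≤ 1 := by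
      have h2 := mul_le_mul_of_nonneg_left hint (by positivity :
        (0:ℝ) ≤ (2 * Real.pi)⁻¹)
      calc (2 * Real.pi)⁻¹ * (∫ θ : ℝ in (0)..2 * Real.pi, ‖f (circleMap 0 ρ' θ)‖)
          ≤ (2 * Real.pi)⁻¹ * (2 * Real.pi) := h2
        _ = 1 := by
            field_simp
    calc ((2 * Real.pi)⁻¹ * ∫ θ : ℝ in (0)..2 * Real.pi, ‖f (circleMap 0 ρ' θ)‖) * ρ⁻¹ ^ n
        ≤ 1 * ρ⁻¹ ^ n := mul_le_mul_of_nonneg_right hfrac (by positivity)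
      _ = ρ⁻¹ ^ n := one_mul _
  -- limit ρ → 1
  apply ge_of_tendsto (f := fun ρ : ℝ => ρ⁻¹ ^ n) (x := 𝓝[<] (1:ℝ))
  · have hc : ContinuousAt (fun ρ : ℝ => ρ⁻¹ ^ n) 1 :=
      ContinuousAt.pow (continuousAt_inv₀ one_ne_zero) n
    have := hc.tendsto.mono_left (nhdsWithin_le_nhds (s := Set.Iio (1:ℝ)))
    simpa using this
  · have hmem : Set.Ioo (1/2 : ℝ) 1 ∈ 𝓝[<] (1:ℝ) :=
      Ioo_mem_nhdsLT_of_mem (by constructor <;> norm_num)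
    filter_upwards [hmem] with ρ hρ
    exact key ρ (by linarith [hρ.1]) hρ.2


private lemma mobius_bound {a w : ℂ} (ha : ‖a‖ ≤ 1) (hw : ‖w‖ ≤ 1) :
    ‖a - w‖ ≤ ‖1 - (starRingEnd ℂ) a * w‖ := by
  have hkey : Complex.normSq (1 - (starRingEnd ℂ) a * w) - Complex.normSq (a - w)
      = (1 - Complex.normSq a) * (1 - Complex.normSq w) := by
    simp only [Complex.normSq_apply, Complex.sub_re, Complex.sub_im, Complex.mul_re,
      Complex.mul_im, Complex.one_re, Complex.one_im, Complex.conj_re, Complex.conj_im]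
    ring
  have ha' : ‖a‖ ≤ 1 := ha
  have hw' : ‖w‖ ≤ 1 := hw
  have ha2 : Complex.normSq a ≤ 1 := by
    rw [Complex.normSq_eq_norm_sq]
    nlinarith [norm_nonneg a, ha']
  have hw2 : Complex.normSq w ≤ 1 := by
    rw [Complex.normSq_eq_norm_sq]
    nlinarith [norm_nonneg w, hw']
  have hle : Complex.normSq (a - w) ≤ Complex.normSq (1 - (starRingEnd ℂ) a * w) := by
    nlinarith [hkey]
  rw [Complex.norm_def, Complex.norm_def]
  exact Real.sqrt_le_sqrt hle

/-- plain Cauchy estimate for the derivative at 0 -/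
private lemma deriv_cauchy {f : ℂ → ℂ} (hd : DifferentiableOn ℂ f (Metric.ball (0:ℂ) 1))
    (hb : ∀ z ∈ Metric.ball (0:ℂ) 1, ‖f z‖ ≤ 1) : ‖deriv f 0‖ ≤ 1 := by
  set ρ' : NNReal := ⟨1/2, by norm_num⟩ with hρ'
  have hcoe : (ρ' : ℝ) = 1/2 := rfl
  have hρpos : 0 < ρ' := by rw [← NNReal.coe_pos, hcoe]; norm_num
  have hfp : HasFPowerSeriesOnBall f (cauchyPowerSeries f 0 ρ') 0 ρ' := by
    apply DifferentiableOn.hasFPowerSeriesOnBall _ hρpos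
    apply hd.mono
    intro z hz
    simp only [Metric.mem_closedBall, Metric.mem_ball, dist_zero_right] at *
    rw [hcoe] at hz
    linarith
  have h1 := cauchy_bound hd hb hfp.hasFPowerSeriesAt 1
  have hder : deriv f 0 = (cauchyPowerSeries f 0 ρ').coeff 1 := hfp.hasFPowerSeriesAt.deriv
  rwa [hder]

/-- Schwarz-Pick at the origin. -/
private lemma deriv_bound {g : ℂ → ℂ} (hd : DifferentiableOn ℂ g (Metric.ball (0:ℂ) 1))
    (hb : ∀ z ∈ Metric.ball (0:ℂ) 1, ‖g z‖ ≤ 1) :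
    ‖deriv g 0‖ ≤ 1 - ‖g 0‖ ^ 2 := by
  have h0mem : (0:ℂ) ∈ Metric.ball (0:ℂ) 1 := by simp
  have hg0 : ‖g 0‖ ≤ 1 := hb 0 h0mem
  have key : ∀ ε : ℝ, 0 < ε → ‖deriv g 0‖ ≤ (1 + ε) - ‖g 0‖ ^ 2 / (1 + ε) := by
    intro ε hε
    set s : ℝ := (1 + ε)⁻¹ with hs
    have hs0 : 0 < s := by positivity
    have hs1 : s < 1 := by
      rw [hs, inv_lt_one_iff₀]
      right; linarith
    set gε : ℂ → ℂ := fun z => (s:ℂ) * g z with hgε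
    have hgεd : DifferentiableOn ℂ gε (Metric.ball (0:ℂ) 1) :=
      (differentiableOn_const _).mul hd
    have hnorms : ‖(s:ℂ)‖ = s := by
      rw [Complex.norm_real, Real.norm_eq_abs, abs_of_pos hs0]
    have hgεb : ∀ z ∈ Metric.ball (0:ℂ) 1, ‖gε z‖ ≤ s := by
      intro z hz
      have h1 : ‖gε z‖ = s * ‖g z‖ := by rw [hgε]; rw [norm_mul, hnorms]
      rw [h1]
      calc s * ‖g z‖ ≤ s * 1 := mul_le_mul_of_nonneg_left (hb z hz) hs0.le
        _ = s := mul_one s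
    set a : ℂ := gε 0 with ha
    have has : ‖a‖ ≤ s := hgεb 0 h0mem
    have ha1 : ‖a‖ < 1 := lt_of_le_of_lt has hs1
    set v : ℂ → ℂ := fun z => 1 - (starRingEnd ℂ) a * gε z with hv
    have hvne : ∀ z ∈ Metric.ball (0:ℂ) 1, v z ≠ 0 := by
      intro z hz
      have hlt : ‖(starRingEnd ℂ) a * gε z‖ < 1 := by
        rw [norm_mul, RCLike.norm_conj]
        calc ‖a‖ * ‖gε z‖ ≤ s * s := mul_le_mul has (hgεb z hz) (norm_nonneg _) hs0.le
          _ < 1 := by nlinarith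
      intro hzero
      have h1 : (1:ℂ) = (starRingEnd ℂ) a * gε z := sub_eq_zero.mp hzero
      rw [← h1] at hlt
      simp at hlt
    set ω : ℂ → ℂ := fun z => (a - gε z) / v z with hω
    have hωd : DifferentiableOn ℂ ω (Metric.ball (0:ℂ) 1) := by
      apply DifferentiableOn.div
      · exact (differentiableOn_const _).sub hgεd
      · exact (differentiableOn_const _).sub ((differentiableOn_const _).mul hgεd)
      · exact hvne
    have hωb : ∀ z ∈ Metric.ball (0:ℂ) 1, ‖ω z‖ ≤ 1 := by
      intro z hz
      rw [hω]
      simp only [norm_div]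
      rw [div_le_one (lt_of_le_of_ne (norm_nonneg _)
        (fun h => hvne z hz ((norm_eq_zero).1 h.symm)))]
      exact mobius_bound ha1.le (lt_of_le_of_lt (hgεb z hz) hs1).le
    -- derivative computation
    have hgat : DifferentiableAt ℂ g 0 :=
      (hd.differentiableAt (Metric.isOpen_ball.mem_nhds h0mem))
    set d : ℂ := deriv g 0 with hdd
    have hgd : HasDerivAt g d 0 := hgat.hasDerivAt
    have hgεdd : HasDerivAt gε ((s:ℂ) * d) 0 := hgd.const_mul (s:ℂ)
    have hnum : HasDerivAt (fun z => a - gε z) (-((s:ℂ)*d)) 0 := by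
      exact hgεdd.const_sub a
    have hden : HasDerivAt v (-((starRingEnd ℂ) a * ((s:ℂ)*d))) 0 := by
      have h2 := hgεdd.const_mul ((starRingEnd ℂ) a)
      exact h2.const_sub 1
    have hv0 : v 0 = 1 - ((Complex.normSq a : ℝ) : ℂ) := by
      show (1:ℂ) - (starRingEnd ℂ) a * gε 0 = _
      rw [← ha, mul_comm, Complex.mul_conj]
    have hv0ne : v 0 ≠ 0 := hvne 0 h0mem
    have hωda : HasDerivAt ω ((-((s:ℂ)*d) * v 0 - (a - gε 0) *
        (-((starRingEnd ℂ) a * ((s:ℂ)*d)))) / v 0 ^ 2) 0 := hnum.div hden hv0ne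
    have hω0 : deriv ω 0 = -((s:ℂ)*d) / v 0 := by
      rw [hωda.deriv, ← ha, sub_self a]
      field_simp
      ring
    have hcb : ‖deriv ω 0‖ ≤ 1 := deriv_cauchy hωd hωb
    rw [hω0] at hcb
    have ha1' : ‖a‖ < 1 := ha1
    have hnsa1 : Complex.normSq a < 1 := by
      rw [Complex.normSq_eq_norm_sq]
      nlinarith [ha1', norm_nonneg a]
    have hnv0 : ‖v 0‖ = 1 - Complex.normSq a := by
      rw [hv0, show ((1:ℂ) - ((Complex.normSq a : ℝ) : ℂ))
          = (((1 - Complex.normSq a : ℝ)) : ℂ) by push_cast; ring,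
        Complex.norm_real, Real.norm_eq_abs, abs_of_pos (by linarith)]
    have hnsa : Complex.normSq a = s^2 * ‖g 0‖^2 := by
      rw [Complex.normSq_eq_norm_sq, ha, hgε]
      simp only [norm_mul, hnorms]
      ring
    rw [norm_div, hnv0, norm_neg, norm_mul, hnorms] at hcb
    rw [div_le_one (by linarith)] at hcb
    rw [hnsa] at hcb
    have hfin : ‖d‖ ≤ (1 - s^2*‖g 0‖^2)/s := by
      rw [le_div_iff₀ hs0]; linarith [hcb]
    calc ‖d‖ ≤ (1 - s^2*‖g 0‖^2)/s := hfin
      _ = (1 + ε) - ‖g 0‖ ^ 2 / (1 + ε) := by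
          rw [hs]
          field_simp
  -- limit ε → 0
  apply ge_of_tendsto (f := fun ε : ℝ => (1 + ε) - ‖g 0‖ ^ 2 / (1 + ε)) (x := 𝓝[>] (0:ℝ))
  · have hc : ContinuousAt (fun ε : ℝ => (1 + ε) - ‖g 0‖ ^ 2 / (1 + ε)) 0 := by
      apply ContinuousAt.sub
      · fun_prop
      · apply ContinuousAt.div
        · fun_prop
        · fun_prop
        · norm_num
    have := hc.tendsto.mono_left (nhdsWithin_le_nhds (s := Set.Ioi (0:ℝ)))
    simpa using this
  · filter_upwards [self_mem_nhdsWithin] with ε hε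
    exact key ε hε


private lemma wiener {B : ℕ → ℂ} (hB : ∀ k, ‖B k‖ ≤ 1)
    (hg : HasFPowerSeriesOnBall (ofScalars ℂ B).sum (ofScalars ℂ B) 0 1)
    (hgb : ∀ z ∈ Metric.ball (0:ℂ) 1, ‖(ofScalars ℂ B).sum z‖ ≤ 1)
    (n : ℕ) (hn : n ≠ 0) : ‖B n‖ ≤ 1 - ‖B 0‖ ^ 2 := by
  set G := (ofScalars ℂ B).sum with hG
  set Cc : ℕ → ℂ := fun k => B (k * n) with hCc
  have hpC : HasFPowerSeriesOnBall (ofScalars ℂ Cc).sum (ofScalars ℂ Cc) 0 1 := by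
    apply framework
    intro x hx0 hx1
    refine ⟨1, fun k => ?_⟩
    calc ‖Cc k‖ * x ^ k ≤ 1 * 1 := by
          apply mul_le_mul (hB _) (pow_le_one₀ hx0.le hx1.le) (by positivity) one_pos.le
      _ = 1 := mul_one 1
  set H := (ofScalars ℂ Cc).sum with hH
  have hζ := Complex.isPrimitiveRoot_exp n hn
  set ζ : ℂ := Complex.exp (2 * Real.pi * Complex.I / n) with hζdef
  have hζ1 : ‖ζ‖ = 1 := by
    rw [hζdef, show (2 * (Real.pi:ℂ) * Complex.I / (n:ℂ))
      = (((2 * Real.pi / n : ℝ)):ℂ) * Complex.I by push_cast; ring]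
    exact Complex.norm_exp_ofReal_mul_I _
  have hHb : ∀ w ∈ Metric.ball (0:ℂ) 1, ‖H w‖ ≤ 1 := by
    intro w hw
    rw [Metric.mem_ball, dist_zero_right] at hw
    obtain ⟨z, hzn⟩ := IsAlgClosed.exists_pow_nat_eq w (Nat.pos_of_ne_zero hn)
    have hz1 : ‖z‖ < 1 := by
      rw [← pow_lt_one_iff_of_nonneg (norm_nonneg z) hn, ← norm_pow, hzn]
      exact hw
    have hjm : ∀ j : ℕ, ζ ^ j * z ∈ Metric.ball (0:ℂ) 1 := by
      intro j
      rw [Metric.mem_ball, dist_zero_right, norm_mul, norm_pow, hζ1, one_pow, one_mul]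
      exact hz1
    have hsum : HasSum (fun k => ∑ j ∈ Finset.range n, B k * (ζ ^ j * z) ^ k)
        (∑ j ∈ Finset.range n, G (ζ ^ j * z)) :=
      hasSum_sum (fun j _ => framework_hasSum hg (hjm j))
    have hterm : (fun k => ∑ j ∈ Finset.range n, B k * (ζ ^ j * z) ^ k)
        = fun k => if n ∣ k then (n:ℂ) * (B k * z ^ k) else 0 := by
      funext k
      have hj : ∀ j, B k * (ζ ^ j * z) ^ k = (B k * z ^ k) * (ζ ^ k) ^ j := by
        intro j
        rw [mul_pow, ← pow_mul, mul_comm j k, pow_mul]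
        ring
      simp only [hj, ← Finset.mul_sum]
      by_cases hdvd : n ∣ k
      · have h1 : ζ ^ k = 1 := (hζ.pow_eq_one_iff_dvd k).2 hdvd
        simp [h1, hdvd]
        ring
      · have hne1 : ζ ^ k ≠ 1 := fun h => hdvd ((hζ.pow_eq_one_iff_dvd k).1 h)
        rw [geom_sum_eq hne1]
        have h1 : (ζ ^ k) ^ n = 1 := by
          rw [← pow_mul, mul_comm k n, pow_mul, hζ.pow_eq_one, one_pow]
        simp [hdvd, h1]
    rw [hterm] at hsum
    have hinj : Function.Injective (fun j : ℕ => j * n) := fun a b h =>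
      Nat.eq_of_mul_eq_mul_right (Nat.pos_of_ne_zero hn) h
    have hoff : ∀ k ∉ Set.range (fun j : ℕ => j * n),
        (if n ∣ k then (n:ℂ) * (B k * z ^ k) else 0) = 0 := by
      intro k hk
      rw [if_neg]
      intro ⟨c, hc⟩
      exact hk ⟨c, by simpa [Nat.mul_comm] using hc.symm⟩
    have hcomp := (Function.Injective.hasSum_iff hinj hoff).2 hsum
    have hcompeq : ((fun k => if n ∣ k then (n:ℂ) * (B k * z ^ k) else 0) ∘ (fun j : ℕ => j * n))
        = fun j => (n:ℂ) * (Cc j * w ^ j) := by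
      funext j
      simp only [Function.comp]
      rw [if_pos ⟨j, mul_comm j n⟩, hCc]
      rw [show z ^ (j * n) = (z ^ n) ^ j by rw [← pow_mul, mul_comm]]
      rw [hzn]
    rw [hcompeq] at hcomp
    have h2 : HasSum (fun j => Cc j * w ^ j) (H w) :=
      framework_hasSum hpC (by rw [Metric.mem_ball, dist_zero_right]; exact hw)
    have h3 := h2.mul_left (n:ℂ)
    have h4 : (n:ℂ) * H w = ∑ j ∈ Finset.range n, G (ζ ^ j * z) := h3.unique hcomp
    have h5 : ‖(n:ℂ) * H w‖ ≤ n := by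
      rw [h4]
      calc ‖∑ j ∈ Finset.range n, G (ζ ^ j * z)‖ ≤ ∑ j ∈ Finset.range n, ‖G (ζ ^ j * z)‖ :=
            norm_sum_le _ _
        _ ≤ ∑ _j ∈ Finset.range n, (1:ℝ) := by
            apply Finset.sum_le_sum
            intro j _
            exact hgb _ (hjm j)
        _ = n := by simp
    rw [norm_mul, Complex.norm_natCast] at h5
    have hnpos : (0:ℝ) < n := by
      exact_mod_cast Nat.pos_of_ne_zero hn
    exact (mul_le_mul_iff_right₀ hnpos).1 (by rw [mul_one]; exact h5)
  have hHd := framework_diff hpC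
  have hDB := deriv_bound hHd hHb
  have hder : deriv H 0 = Cc 1 := by
    have h := hpC.hasFPowerSeriesAt.deriv
    exact h.trans (framework_coeff 1)
  have hzero : H 0 = Cc 0 := by
    have h0 : HasSum (fun k => Cc k * (0:ℂ) ^ k) (H 0) :=
      framework_hasSum hpC (by simp)
    have h0' : HasSum (fun k => Cc k * (0:ℂ) ^ k) (Cc 0) := by
      have h1 := hasSum_single (f := fun k => Cc k * (0:ℂ) ^ k) 0
        (fun b hb => by simp [zero_pow hb])
      simpa using h1
    exact h0.unique h0'
  rw [hder, show (ofScalars ℂ Cc).sum 0 = Cc 0 from hzero] at hDB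
  simpa [hCc] using hDB


private lemma shift_hasSum {m : ℕ} {A : ℕ → ℂ} (h0 : ∀ n, n < m → A n = 0) {z s : ℂ} :
    HasSum (fun k => A (k + m) * z ^ (k + m)) s ↔ HasSum (fun n => A n * z ^ n) s := by
  refine Function.Injective.hasSum_iff (f := fun n => A n * z ^ n)
    (g := fun k => k + m) (fun a b hab => by simp only [] at hab; omega) ?_
  intro n hn
  have hnm : n < m := by
    by_contra h
    push_neg at h
    exact hn ⟨n - m, by simp only []; omega⟩
  show A n * z ^ n = 0
  rw [h0 n hnm, zero_mul]

set_option maxHeartbeats 1000000 in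
private lemma part_one (m : ℕ) (f : ℂ → ℂ) (A : ℕ → ℂ)
    (hf : ∀ z ∈ Metric.ball (0:ℂ) 1, HasSum (fun n : ℕ => A n * z ^ n) (f z))
    (h0 : ∀ n, n < m → A n = 0)
    (hb : ∀ z ∈ Metric.ball (0:ℂ) 1, ‖f z‖ ≤ 1)
    (r : ℝ) (hr0 : 0 ≤ r) (hr1 : r ≤ 1 - (2 / 3 : ℝ) ^ ((1 : ℝ) / ((m : ℝ) + 1))) :
    Summable (fun n : ℕ => (Nat.choose (n + m) m : ℝ) * ‖A (n + m)‖ * r ^ n) ∧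
    ∑' n : ℕ, (Nat.choose (n + m) m : ℝ) * ‖A (n + m)‖ * r ^ n ≤ 1 := by
  set c : ℝ := (2 / 3 : ℝ) ^ ((1 : ℝ) / ((m : ℝ) + 1)) with hc
  have hc0 : 0 < c := Real.rpow_pos_of_pos (by norm_num) _
  have hcpow : c ^ (m + 1) = 2 / 3 := by
    rw [hc, ← Real.rpow_natCast ((2/3:ℝ) ^ ((1:ℝ)/((m:ℝ)+1))) (m+1),
      ← Real.rpow_mul (by norm_num : (0:ℝ) ≤ 2/3)]
    rw [show (1:ℝ)/((m:ℝ)+1) * ((m+1 : ℕ):ℝ) = 1 by push_cast; field_simp]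
    exact Real.rpow_one _
  have hrlt1 : r < 1 := by linarith
  -- build power series for f
  have hboundA : ∀ x : ℝ, 0 < x → x < 1 → ∃ C, ∀ n, ‖A n‖ * x ^ n ≤ C := by
    intro x hx0 hx1
    have hxm : (x:ℂ) ∈ Metric.ball (0:ℂ) 1 := by
      rw [Metric.mem_ball, dist_zero_right, Complex.norm_real, Real.norm_eq_abs, abs_of_pos hx0]
      exact hx1
    have hsummable := (hf _ hxm).summable
    have htend : Tendsto (fun n => ‖A n * (x:ℂ) ^ n‖) atTop (𝓝 0) := by
      have := hsummable.tendsto_atTop_zero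
      simpa using this.norm
    obtain ⟨C, hC⟩ := htend.bddAbove_range
    refine ⟨C, fun n => ?_⟩
    have h1 : ‖A n * (x:ℂ) ^ n‖ = ‖A n‖ * x ^ n := by
      rw [norm_mul, norm_pow, Complex.norm_real, Real.norm_eq_abs, abs_of_pos hx0]
    rw [← h1]
    exact hC ⟨n, rfl⟩
  have hpA := framework hboundA
  have hfeq : ∀ z ∈ Metric.ball (0:ℂ) 1, f z = (ofScalars ℂ A).sum z :=
    fun z hz => (hf z hz).unique (framework_hasSum hpA hz)
  have hsumb : ∀ z ∈ Metric.ball (0:ℂ) 1, ‖(ofScalars ℂ A).sum z‖ ≤ 1 :=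
    fun z hz => by rw [← hfeq z hz]; exact hb z hz
  have hA1 : ∀ n, ‖A n‖ ≤ 1 := by
    intro n
    have := cauchy_bound (framework_diff hpA) hsumb hpA.hasFPowerSeriesAt n
    rwa [framework_coeff] at this
  -- divided function G
  set B : ℕ → ℂ := fun k => A (k + m) with hB
  have hB1 : ∀ k, ‖B k‖ ≤ 1 := fun k => hA1 _
  have hpB := framework (B := B) (fun x hx0 hx1 => ⟨1, fun k => by
    calc ‖B k‖ * x ^ k ≤ 1 * 1 := by
          apply mul_le_mul (hB1 _) (pow_le_one₀ hx0.le hx1.le) (by positivity) one_pos.le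
      _ = 1 := mul_one 1⟩)
  set G := (ofScalars ℂ B).sum with hG
  have hfzg : ∀ z ∈ Metric.ball (0:ℂ) 1, f z = z ^ m * G z := by
    intro z hz
    have h1 := framework_hasSum hpB hz
    have h2 := h1.mul_left (z ^ m)
    have h3 : (fun k => z ^ m * (B k * z ^ k)) = fun k => A (k + m) * z ^ (k + m) := by
      funext k
      rw [hB, pow_add]
      ring
    rw [h3] at h2
    exact (hf z hz).unique ((shift_hasSum h0).1 h2)
  have hGb : ∀ z ∈ Metric.ball (0:ℂ) 1, ‖G z‖ ≤ 1 := by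
    intro z hz
    rw [Metric.mem_ball, dist_zero_right] at hz
    have key : ∀ ρ : ℝ, ‖z‖ < ρ → ρ < 1 → ‖G z‖ ≤ (ρ ^ m)⁻¹ := by
      intro ρ hρz hρ1
      have hρ0 : 0 < ρ := lt_of_le_of_lt (norm_nonneg z) hρz
      have hρm : (0:ℝ) < ρ ^ m := by positivity
      apply Complex.norm_le_of_forall_mem_frontier_norm_le (isBounded_ball (x := (0:ℂ)) (r := ρ))
      · apply DifferentiableOn.diffContOnCl
        rw [closure_ball _ (ne_of_gt hρ0)]
        apply (framework_diff hpB).mono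
        intro w hw
        rw [Metric.mem_closedBall, dist_zero_right] at hw
        rw [Metric.mem_ball, dist_zero_right]
        linarith
      · intro w hw
        rw [frontier_ball _ (ne_of_gt hρ0), mem_sphere_iff_norm, sub_zero] at hw
        have hw1 : w ∈ Metric.ball (0:ℂ) 1 := by
          rw [Metric.mem_ball, dist_zero_right, hw]
          exact hρ1
        have h1 := hb w hw1
        rw [hfzg w hw1, norm_mul, norm_pow, hw] at h1
        rw [inv_eq_one_div, le_div_iff₀ hρm]
        linarith
      · exact subset_closure (by rw [Metric.mem_ball, dist_zero_right]; exact hρz)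
    apply ge_of_tendsto (f := fun ρ : ℝ => (ρ ^ m)⁻¹) (x := 𝓝[<] (1:ℝ))
    · have hcont : ContinuousAt (fun ρ : ℝ => (ρ ^ m)⁻¹) 1 := by
        apply ContinuousAt.inv₀ (by fun_prop)
        norm_num
      have := hcont.tendsto.mono_left (nhdsWithin_le_nhds (s := Set.Iio (1:ℝ)))
      simpa using this
    · have hmax : max ‖z‖ (1/2) < 1 := by
        rw [max_lt_iff]
        exact ⟨hz, by norm_num⟩
      filter_upwards [Ioo_mem_nhdsLT_of_mem (show (1:ℝ) ∈ Set.Ioc (max ‖z‖ (1/2)) 1 by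
        exact ⟨hmax, le_refl 1⟩)] with ρ hρ
      exact key ρ (lt_of_le_of_lt (le_max_left _ _) hρ.1) hρ.2
  have hBw : ∀ k, k ≠ 0 → ‖B k‖ ≤ 1 - ‖B 0‖ ^ 2 := fun k hk => wiener hB1 hpB hGb k hk
  -- summation
  set t : ℝ := ‖A (0 + m)‖ with ht
  have ht0 : 0 ≤ t := norm_nonneg _
  have ht1 : t ≤ 1 := hA1 _
  have hrn : ‖r‖ < 1 := by rw [Real.norm_eq_abs, abs_of_nonneg hr0]; exact hrlt1
  have hV := hasSum_choose_mul_geometric_of_norm_lt_one m hrn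
  set V : ℝ := 1 / (1 - r) ^ (m + 1) with hVdef
  have hmaj : Summable (fun n : ℕ => ((n + m).choose m : ℝ) * r ^ n) := hV.summable
  have hterm_nonneg : ∀ n : ℕ, 0 ≤ ((n + m).choose m : ℝ) * ‖A (n + m)‖ * r ^ n := by
    intro n; positivity
  have hterm_le : ∀ n : ℕ, ((n + m).choose m : ℝ) * ‖A (n + m)‖ * r ^ n
      ≤ ((n + m).choose m : ℝ) * r ^ n := by
    intro n
    calc ((n + m).choose m : ℝ) * ‖A (n + m)‖ * r ^ n
        ≤ ((n + m).choose m : ℝ) * 1 * r ^ n := by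
          apply mul_le_mul_of_nonneg_right _ (by positivity)
          exact mul_le_mul_of_nonneg_left (hA1 _) (by positivity)
      _ = ((n + m).choose m : ℝ) * r ^ n := by rw [mul_one]
  have hS : Summable (fun n : ℕ => ((n + m).choose m : ℝ) * ‖A (n + m)‖ * r ^ n) :=
    Summable.of_nonneg_of_le hterm_nonneg hterm_le hmaj
  refine ⟨hS, ?_⟩
  have htail : HasSum (fun n : ℕ => (((n + 1) + m).choose m : ℝ) * r ^ (n + 1)) (V - 1) := by
    rw [hasSum_nat_add_iff (f := fun n => ((n + m).choose m : ℝ) * r ^ n) 1]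
    simpa using hV
  have htailS : Summable (fun n : ℕ => (((n + 1) + m).choose m : ℝ)
      * ‖A ((n + 1) + m)‖ * r ^ (n + 1)) := (summable_nat_add_iff 1).2 hS
  have hVsum := (htail.mul_left (1 - t ^ 2)).tsum_eq
  have hbnd : ∀ n : ℕ, (((n + 1) + m).choose m : ℝ) * ‖A ((n + 1) + m)‖ * r ^ (n + 1)
      ≤ (1 - t ^ 2) * ((((n + 1) + m).choose m : ℝ) * r ^ (n + 1)) := by
    intro n
    have hw := hBw (n + 1) (Nat.succ_ne_zero n)

    have hw' : ‖A ((n + 1) + m)‖ ≤ 1 - t ^ 2 := hw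
    calc (((n + 1) + m).choose m : ℝ) * ‖A ((n + 1) + m)‖ * r ^ (n + 1)
        ≤ (((n + 1) + m).choose m : ℝ) * (1 - t ^ 2) * r ^ (n + 1) := by
          apply mul_le_mul_of_nonneg_right _ (by positivity)
          exact mul_le_mul_of_nonneg_left hw' (by positivity)
      _ = (1 - t ^ 2) * ((((n + 1) + m).choose m : ℝ) * r ^ (n + 1)) := by ring
  have htsum_le : (∑' n : ℕ, (((n + 1) + m).choose m : ℝ) * ‖A ((n + 1) + m)‖ * r ^ (n + 1))
      ≤ (1 - t ^ 2) * (V - 1) := by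
    rw [← hVsum]
    exact htailS.tsum_le_tsum hbnd (htail.mul_left _).summable
  have hsplit := Summable.tsum_eq_zero_add hS
  have hfirst : ((0 + m).choose m : ℝ) * ‖A (0 + m)‖ * r ^ 0 = t := by
    rw [ht]
    simp [Nat.choose_self]
  rw [hsplit, hfirst]
  -- numeric inequality
  have h23 : (2/3 : ℝ) ≤ (1 - r) ^ (m + 1) := by
    rw [← hcpow]
    apply pow_le_pow_left₀ hc0.le
    linarith
  have hpos : (0:ℝ) < (1 - r) ^ (m + 1) := by positivity
  have hVle : V ≤ 3 / 2 := by
    rw [hVdef, div_le_iff₀ hpos]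
    nlinarith
  have hV1 : 1 ≤ V := by
    rw [hVdef, le_div_iff₀ hpos, one_mul]
    apply pow_le_one₀ (by linarith) (by linarith)
  have hprod : (V - 1) * (1 + t) ≤ 1 := by nlinarith
  nlinarith [htsum_le, mul_nonneg (sub_nonneg.2 ht1) (sub_nonneg.2 hprod)]


set_option maxHeartbeats 1000000 in
private lemma part_two (m : ℕ) (r : ℝ)
    (hr1 : 1 - (2 / 3 : ℝ) ^ ((1 : ℝ) / ((m : ℝ) + 1)) < r) (hr2 : r < 1) :
    ∃ (f : ℂ → ℂ) (A : ℕ → ℂ),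
      (∀ z ∈ Metric.ball (0 : ℂ) 1, HasSum (fun n : ℕ => A n * z ^ n) (f z)) ∧
      (∀ n, n < m → A n = 0) ∧
      (∀ z ∈ Metric.ball (0 : ℂ) 1, ‖f z‖ ≤ 1) ∧
      Summable (fun n : ℕ => (Nat.choose (n + m) m : ℝ) * ‖A (n + m)‖ * r ^ n) ∧
      1 < ∑' n : ℕ, (Nat.choose (n + m) m : ℝ) * ‖A (n + m)‖ * r ^ n := by
  set c : ℝ := (2 / 3 : ℝ) ^ ((1 : ℝ) / ((m : ℝ) + 1)) with hc
  have hc0 : 0 < c := Real.rpow_pos_of_pos (by norm_num) _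
  have hc1 : c < 1 := by
    apply Real.rpow_lt_one (by norm_num) (by norm_num)
    positivity
  have hcpow : c ^ (m + 1) = 2 / 3 := by
    rw [hc, ← Real.rpow_natCast ((2/3:ℝ) ^ ((1:ℝ)/((m:ℝ)+1))) (m+1),
      ← Real.rpow_mul (by norm_num : (0:ℝ) ≤ 2/3)]
    rw [show (1:ℝ)/((m:ℝ)+1) * ((m+1 : ℕ):ℝ) = 1 by push_cast; field_simp]
    exact Real.rpow_one _
  have hr0 : 0 < r := by linarith
  have h23 : (1 - r) ^ (m + 1) < 2 / 3 := by
    rw [← hcpow]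
    apply pow_lt_pow_left₀ (by linarith) (by linarith) (Nat.succ_ne_zero m)
  -- choose t
  set G : ℝ → ℝ := fun u => (1 + u) * ((1 - u * r) ^ (m + 1))⁻¹ - (1 + u) - u with hGdef
  have hpos1 : (0:ℝ) < (1 - r) ^ (m + 1) := pow_pos (by linarith) _
  have hG1 : 0 < G 1 := by
    have hinv : ((1 - r) ^ (m + 1))⁻¹ * ((1 - r) ^ (m + 1)) = 1 :=
      inv_mul_cancel₀ (ne_of_gt hpos1)
    have hinvpos : 0 < ((1 - r) ^ (m + 1))⁻¹ := inv_pos.2 hpos1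
    have hG1eq : G 1 = 2 * ((1 - r) ^ (m + 1))⁻¹ - 3 := by
      rw [hGdef]
      simp only [one_mul]
      ring_nf
    rw [hG1eq]
    nlinarith [hinv, h23, hinvpos]
  have hcont : ContinuousAt G 1 := by
    apply ContinuousAt.sub
    apply ContinuousAt.sub
    · apply ContinuousAt.mul (by fun_prop)
      apply ContinuousAt.inv₀ (by fun_prop)
      show (1 - 1 * r) ^ (m+1) ≠ 0
      rw [one_mul]
      exact ne_of_gt hpos1
    · fun_prop
    · fun_prop
  have hev : ∀ᶠ u in 𝓝[<] (1:ℝ), 0 < G u :=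
    (hcont.tendsto.eventually (eventually_gt_nhds hG1)).filter_mono nhdsWithin_le_nhds
  have hIoo : ∀ᶠ u in 𝓝[<] (1:ℝ), u ∈ Set.Ioo (0:ℝ) 1 :=
    Ioo_mem_nhdsLT_of_mem (by exact ⟨by norm_num, le_refl 1⟩)
  obtain ⟨t, hGt, ht01⟩ := (hev.and hIoo).exists
  obtain ⟨ht0, ht1⟩ := ht01
  -- define f and A
  set A : ℕ → ℂ := fun n => if n < m then 0 else if n = m then (t:ℂ)
    else -(1 - (t:ℂ)^2) * (t:ℂ)^(n - m - 1) with hA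
  set f : ℂ → ℂ := fun z => z ^ m * ((t - z) / (1 - t*z)) with hfdef
  have hAm : A m = (t:ℂ) := by
    rw [hA]
    simp
  have hAmk : ∀ k, A (m+1+k) = -(1 - (t:ℂ)^2) * (t:ℂ)^k := by
    intro k
    have h1 : ¬(m+1+k < m) := by omega
    have h2 : ¬(m+1+k = m) := by omega
    simp only [hA, if_neg h1, if_neg h2]
    rw [show m+1+k-m-1 = k from by omega]
  have h0 : ∀ n, n < m → A n = 0 := by
    intro n hn
    rw [hA]
    simp [hn]
  have hnt : ‖(t:ℂ)‖ = t := by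
    rw [Complex.norm_real, Real.norm_eq_abs, abs_of_pos ht0]
  have hden : ∀ z ∈ Metric.ball (0:ℂ) 1, (1:ℂ) - t*z ≠ 0 := by
    intro z hz
    rw [Metric.mem_ball, dist_zero_right] at hz
    have hlt : ‖(t:ℂ)*z‖ < 1 := by
      rw [norm_mul, hnt]
      nlinarith [norm_nonneg z]
    intro hzero
    have h1 : (1:ℂ) = (t:ℂ) * z := sub_eq_zero.mp hzero
    rw [← h1] at hlt
    simp at hlt
  have hf : ∀ z ∈ Metric.ball (0:ℂ) 1, HasSum (fun n : ℕ => A n * z ^ n) (f z) := by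
    intro z hz
    have hz1 : ‖z‖ < 1 := by rwa [Metric.mem_ball, dist_zero_right] at hz
    have htz : ‖(t:ℂ)*z‖ < 1 := by
      rw [norm_mul, hnt]
      nlinarith [norm_nonneg z]
    set c0 : ℂ := -(1 - (t:ℂ)^2) * z^(m+1) with hc0def
    have h1 := (hasSum_geometric_of_norm_lt_one htz).mul_left c0
    have h2 : (fun k => c0 * ((t:ℂ)*z)^k) = fun k => A (k + (m+1)) * z ^ (k + (m+1)) := by
      funext k
      rw [show k + (m+1) = m+1+k by omega, hAmk k, hc0def]
      rw [mul_pow, pow_add]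
      ring
    rw [h2] at h1
    have h3 := (hasSum_nat_add_iff (f := fun n => A n * z ^ n) (m+1)).1 h1
    have hsumval : c0 * ((1:ℂ) - t*z)⁻¹ + ∑ i ∈ Finset.range (m+1), A i * z ^ i = f z := by
      rw [Finset.sum_range_succ]
      rw [show ∑ i ∈ Finset.range m, A i * z ^ i = 0 by
        apply Finset.sum_eq_zero
        intro i hi
        rw [h0 i (Finset.mem_range.1 hi), zero_mul]]
      rw [hAm, hc0def, hfdef, zero_add]
      have hd := hden z hz
      field_simp
      ring
    rwa [hsumval] at h3
  have hbf : ∀ z ∈ Metric.ball (0:ℂ) 1, ‖f z‖ ≤ 1 := by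
    intro z hz
    have hz1 : ‖z‖ < 1 := by rwa [Metric.mem_ball, dist_zero_right] at hz
    rw [hfdef]
    simp only [norm_mul, norm_div, norm_pow]
    have hmob : ‖(t:ℂ) - z‖ ≤ ‖1 - (t:ℂ)*z‖ := by
      have := mobius_bound (a := (t:ℂ)) (w := z) (by rw [hnt]; linarith) hz1.le
      rwa [Complex.conj_ofReal] at this
    have hdpos : 0 < ‖(1:ℂ) - t*z‖ :=
      lt_of_le_of_ne (norm_nonneg _) (fun h => hden z hz ((norm_eq_zero).1 h.symm))
    calc ‖z‖^m * (‖(t:ℂ) - z‖ / ‖(1:ℂ) - t*z‖) ≤ 1 * 1 := by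
          apply mul_le_mul
          · exact pow_le_one₀ (norm_nonneg z) hz1.le
          · rw [div_le_one hdpos]; exact hmob
          · positivity
          · norm_num
      _ = 1 := mul_one 1
  -- the norm series
  have hnorm0 : ‖A (0 + m)‖ = t := by
    rw [zero_add, hAm, hnt]
  have hnormk : ∀ k, ‖A ((k+1) + m)‖ = (1 - t^2) * t^k := by
    intro k
    rw [show (k+1) + m = m+1+k by omega, hAmk k]
    rw [show -(1 - (t:ℂ)^2) * (t:ℂ)^k = (((-(1 - t^2) * t^k : ℝ)):ℂ) by push_cast; ring]
    have hsq : t^2 ≤ 1 := by nlinarith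
    have hpk : 0 < t^k := pow_pos ht0 k
    rw [Complex.norm_real, Real.norm_eq_abs, abs_of_nonpos (by nlinarith)]
    ring
  have htr : ‖t * r‖ < 1 := by
    rw [Real.norm_eq_abs, abs_of_pos (by positivity)]
    nlinarith
  have hVr := hasSum_choose_mul_geometric_of_norm_lt_one m htr
  set W : ℝ := 1 / (1 - t*r) ^ (m + 1) with hWdef
  have htail : HasSum (fun k : ℕ => (((k+1) + m).choose m : ℝ) * (t*r) ^ (k+1)) (W - 1) := by
    rw [hasSum_nat_add_iff (f := fun k => ((k + m).choose m : ℝ) * (t*r) ^ k) 1]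
    simpa using hVr
  have hmul := htail.mul_left ((1 - t^2)/t)
  have heq : (fun k : ℕ => ((1 - t^2)/t) * ((((k+1) + m).choose m : ℝ) * (t*r) ^ (k+1)))
      = fun k : ℕ => (((k+1) + m).choose m : ℝ) * ‖A ((k+1) + m)‖ * r ^ (k+1) := by
    funext k
    rw [hnormk k, mul_pow]
    have htne : t ≠ 0 := ne_of_gt ht0
    field_simp
    ring
  rw [heq] at hmul
  have hfull := (hasSum_nat_add_iff
    (f := fun k => ((k + m).choose m : ℝ) * ‖A (k + m)‖ * r ^ k) 1).1 hmul
  have hfirstval : ∑ i ∈ Finset.range 1, ((i + m).choose m : ℝ) * ‖A (i + m)‖ * r ^ i = t := by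
    rw [Finset.sum_range_one, hnorm0]
    simp [Nat.choose_self]
  rw [hfirstval] at hfull
  refine ⟨f, A, hf, h0, hbf, hfull.summable, ?_⟩
  rw [hfull.tsum_eq]
  -- final numeric inequality
  have hWinv : W = ((1 - t*r) ^ (m + 1))⁻¹ := by rw [hWdef, one_div]
  have hGteq : G t = (1 + t) * (W - 1) - t := by
    rw [hGdef, hWinv]
    simp only []
    rw [mul_comm t r]
    ring
  rw [hGteq] at hGt
  have h5 : 0 < (1 - t) * ((1 + t) * (W - 1) - t) := mul_pos (by linarith) hGt
  have hexp : ((1 - t^2)/t) * (W - 1) * t = (1 - t^2) * (W - 1) := by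
    field_simp
  nlinarith [h5, hexp, ht0]

theorem bohr_radius_normalized_mth_derivative (m : ℕ) :
    (∀ (f : ℂ → ℂ) (A : ℕ → ℂ),
      (∀ z ∈ Metric.ball (0 : ℂ) 1, HasSum (fun n : ℕ => A n * z ^ n) (f z)) →
      (∀ n, n < m → A n = 0) →
      (∀ z ∈ Metric.ball (0 : ℂ) 1, ‖f z‖ ≤ 1) →
      ∀ r : ℝ, 0 ≤ r → r ≤ 1 - (2 / 3 : ℝ) ^ ((1 : ℝ) / ((m : ℝ) + 1)) →
        Summable (fun n : ℕ => (Nat.choose (n + m) m : ℝ) * ‖A (n + m)‖ * r ^ n) ∧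
        ∑' n : ℕ, (Nat.choose (n + m) m : ℝ) * ‖A (n + m)‖ * r ^ n ≤ 1) ∧
    (∀ r : ℝ, 1 - (2 / 3 : ℝ) ^ ((1 : ℝ) / ((m : ℝ) + 1)) < r → r < 1 →
      ∃ (f : ℂ → ℂ) (A : ℕ → ℂ),
        (∀ z ∈ Metric.ball (0 : ℂ) 1, HasSum (fun n : ℕ => A n * z ^ n) (f z)) ∧
        (∀ n, n < m → A n = 0) ∧
        (∀ z ∈ Metric.ball (0 : ℂ) 1, ‖f z‖ ≤ 1) ∧
        Summable (fun n : ℕ => (Nat.choose (n + m) m : ℝ) * ‖A (n + m)‖ * r ^ n) ∧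
        1 < ∑' n : ℕ, (Nat.choose (n + m) m : ℝ) * ‖A (n + m)‖ * r ^ n) := by
  constructor
  · intro f A hf h0 hb r hr0 hr1
    exact part_one m f A hf h0 hb r hr0 hr1
  · intro r hr1 hr2
    exact part_two m r hr1 hr2
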